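/- Let P be a symmetric polytope in ℝ^n, let v ∈ ℝ^n, and let H = {x ∈ ℝ^n : ⟨x, v⟩ = 0}. Define the halves P₊ = {x ∈ P : ⟨x, v⟩ ≥ 0} and P₋ = {x ∈ P : ⟨x, v⟩ ≤ 0}. Then P₊ + (-P₊) = P₋ + (-P₋) = P₊ + P₋ = P + (P ∩ H), where all sums are Minkowski sums. -/

import Mathlib

open Pointwise

/-- A polytope in `ℝ^n`: the convex hull of a nonempty finite subset of `ℝ^n`. -/
def IsPolytope {n : ℕ} (P : Set (Fin n → ℝ)) : Prop :=
  ∃ S : Finset (Fin n → ℝ), S.Nonempty ∧ P = convexHull ℝ (S : Set (Fin n → ℝ))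

/-- Normalization by a hyperplane: for a symmetric polytope `P` and a hyperplane
`H = {x : ⟨x,v⟩ = 0}`, the halves `P₊, P₋` satisfy
`P₊ + (-P₊) = P₋ + (-P₋) = P₊ + P₋ = P + (P ∩ H)`. -/
theorem normalization_by_hyperplane (n : ℕ) (P : Set (Fin n → ℝ))
    (hP : IsPolytope P) (hsym : P = -P) (v : Fin n → ℝ) :
    let H : Set (Fin n → ℝ) := {x | ∑ i, x i * v i = 0}
    let Pp : Set (Fin n → ℝ) := {x ∈ P | 0 ≤ ∑ i, x i * v i}
    let Pm : Set (Fin n → ℝ) := {x ∈ P | ∑ i, x i * v i ≤ 0}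
    Pp + (-Pp) = Pm + (-Pm) ∧ Pm + (-Pm) = Pp + Pm ∧ Pp + Pm = P + (P ∩ H) := by
  intro H Pp Pm
  obtain ⟨S, hS, hPS⟩ := hP
  have hconv : Convex ℝ P := hPS ▸ convex_convexHull ℝ _
  set f : (Fin n → ℝ) → ℝ := fun x => ∑ i, x i * v i with hf
  have hflin : ∀ (c d : ℝ) (a b : Fin n → ℝ), f (c • a + d • b) = c * f a + d * f b := by
    intro c d a b
    simp only [hf, Pi.add_apply, Pi.smul_apply, smul_eq_mul, add_mul, Finset.sum_add_distrib,
      Finset.mul_sum, mul_assoc]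
  have hfneg : ∀ x, f (-x) = -f x := by
    intro x
    simp [hf, neg_mul]
  have hPneg : ∀ x, x ∈ P ↔ -x ∈ P := by
    intro x
    constructor
    · intro hx
      rw [hsym] at hx
      simpa using hx
    · intro hx
      rw [hsym]
      simpa using hx
  have hneg : -Pp = Pm := by
    ext x
    simp only [Set.mem_neg, Pp, Pm, Set.mem_setOf_eq]
    constructor
    · rintro ⟨h1, h2⟩
      have h2' : 0 ≤ f (-x) := h2
      rw [hfneg] at h2'
      exact ⟨(hPneg x).2 h1, by linarith⟩
    · rintro ⟨h1, h2⟩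
      refine ⟨(hPneg x).1 h1, ?_⟩
      show (0:ℝ) ≤ f (-x)
      rw [hfneg]
      show (0:ℝ) ≤ -f x
      have h2' : f x ≤ 0 := h2
      linarith
  have hneg' : -Pm = Pp := by rw [← hneg, neg_neg]
  have key : Pp + Pm = P + (P ∩ H) := by
    apply Set.Subset.antisymm
    · rintro x hx
      rw [Set.mem_add] at hx
      obtain ⟨a, ha, b, hb, rfl⟩ := hx
      obtain ⟨haP, hsa⟩ := ha
      obtain ⟨hbP, hrb⟩ := hb
      set s : ℝ := f a with hsdef
      set r : ℝ := -f b with hrdef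
      have hs : 0 ≤ s := hsa
      have hr : 0 ≤ r := by simp only [hrdef]; linarith
      rcases eq_or_lt_of_le (by linarith : (0:ℝ) ≤ s + r) with h0 | hpos
      · -- s = r = 0
        have hs0 : s = 0 := by linarith
        refine Set.mem_add.2 ⟨b, hbP, a, ⟨haP, ?_⟩, add_comm b a⟩
        show f a = 0
        rw [← hsdef, hs0]
      · set c : ℝ := r / (s + r) with hcdef
        set d : ℝ := s / (s + r) with hddef
        have hcd : c + d = 1 := by
          rw [hcdef, hddef, ← add_div]
          rw [add_comm r s]
          exact div_self hpos.ne'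
        have hc : 0 ≤ c := div_nonneg hr hpos.le
        have hd : 0 ≤ d := div_nonneg hs hpos.le
        have hq : c • a + d • b ∈ P := hconv haP hbP hc hd hcd
        have hp : d • a + c • b ∈ P := hconv haP hbP hd hc (by linarith)
        have hqH : f (c • a + d • b) = 0 := by
          rw [hflin]
          have hfb : f b = -r := by rw [hrdef]; ring
          rw [← hsdef, hfb, hcdef, hddef]
          field_simp
          ring
        refine Set.mem_add.2 ⟨d • a + c • b, hp, c • a + d • b, ⟨hq, hqH⟩, ?_⟩
        have : (d • a + c • b) + (c • a + d • b) = (c + d) • a + (c + d) • b := by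
          rw [add_smul, add_smul]; abel
        rw [this, hcd, one_smul, one_smul]
    · rintro x hx
      rw [Set.mem_add] at hx
      obtain ⟨p, hp, q, ⟨hqP, hqH⟩, rfl⟩ := hx
      have hq0 : f q = 0 := hqH
      by_cases h : 0 ≤ f p
      · exact Set.mem_add.2 ⟨p, ⟨hp, h⟩, q, ⟨hqP, le_of_eq hq0⟩, rfl⟩
      · exact Set.mem_add.2 ⟨q, ⟨hqP, ge_of_eq hq0⟩, p, ⟨hp, le_of_not_ge h⟩, add_comm q p⟩
  refine ⟨?_, ?_, key⟩
  · rw [hneg, hneg']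
    exact add_comm Pp Pm
  · rw [hneg']
    exact add_comm Pm Pp
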